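/- Let U and W be finite-dimensional vector spaces over an algebraically closed field k, and suppose ρ: U ⊗ O_{ℙⁿ} → W ⊗ O_{ℙⁿ}(1) is a morphism of sheaves on ℙⁿ that is not injective. Then for every integer m ≥ (dim(U) − 1)·n one has H^0(ker(ρ)(m)) ≠ 0. -/

import Mathlib

open Matrix MvPolynomial

-- det of a matrix of homogeneous degree-1 polys is homogeneous of degree s
lemma det_isHomogeneous {k : Type*} [CommRing k] {σ : Type*} {s : ℕ}
    (A : Matrix (Fin s) (Fin s) (MvPolynomial σ k))
    (h : ∀ i j, (A i j).IsHomogeneous 1) : A.det.IsHomogeneous s := by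
  rw [← mem_homogeneousSubmodule, Matrix.det_apply]
  refine Submodule.sum_mem _ fun σ' _ => ?_
  have hp : (∏ i, A (σ' i) i) ∈ homogeneousSubmodule σ k s := by
    rw [mem_homogeneousSubmodule]
    have := MvPolynomial.IsHomogeneous.prod Finset.univ (fun i => A (σ' i) i) (fun _ => 1)
      (fun i _ => h _ _)
    simpa using this
  rcases Int.units_eq_one_or (Equiv.Perm.sign σ') with hs | hs <;> rw [hs]
  · simpa using hp
  · rw [Units.neg_smul, one_smul]
    exact Submodule.neg_mem _ hp

-- injective mulVec has an invertible row-submatrix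
lemma exists_unit_submatrix {F : Type*} [Field F] {w s : ℕ} (A : Matrix (Fin w) (Fin s) F)
    (hA : Function.Injective A.mulVec) :
    ∃ T : Fin s → Fin w, IsUnit (A.submatrix T id) := by
  classical
  have hrank : A.rank = s := by
    rw [Matrix.rank, LinearMap.finrank_range_of_inj]
    · simp
    · show Function.Injective A.mulVecLin
      exact hA
  have hspan : Submodule.span F (Set.range fun i => A i) = ⊤ := by
    apply Submodule.eq_top_of_finrank_eq
    change Module.finrank F (Submodule.span F (Set.range A.row)) = _
    rw [← Matrix.rank_eq_finrank_span_row, hrank]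
    simp
  obtain ⟨b, hbsub, hbspan, hbind⟩ := exists_linearIndependent F (Set.range fun i => A i)
  rw [hspan] at hbspan
  haveI : Fintype b := ((Set.finite_range _).subset hbsub).fintype
  let bas : Module.Basis b F (Fin s → F) := Module.Basis.mk hbind (by rw [Subtype.range_coe, hbspan])
  have hcard : Fintype.card b = s := by
    have := Module.finrank_eq_card_basis bas
    simp at this
    rw [← Nat.card_eq_fintype_card, Nat.card_coe_set_eq]
    omega
  let e : Fin s ≃ b := (Fintype.equivFinOfCardEq hcard).symm
  have hpick : ∀ l : Fin s, ∃ i : Fin w, A i = (e l : Fin s → F) := fun l => hbsub (e l).2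
  choose T hT using hpick
  refine ⟨T, ?_⟩
  rw [← Matrix.linearIndependent_rows_iff_isUnit]
  have : (fun l => (A.submatrix T id) l) = fun l => ((e l : Fin s → F)) := by
    funext l
    ext j
    simp [Matrix.submatrix_apply, hT l]
  change LinearIndependent F (fun l => (A.submatrix T id) l)
  rw [this]
  exact hbind.comp e (e.injective)

lemma mulVec_map' {R S : Type*} [CommSemiring R] [CommSemiring S] (f : R →+* S)
    {a b : ℕ} (M : Matrix (Fin a) (Fin b) R) (v : Fin b → R) (i : Fin a) :
    (M.map f).mulVec (fun j => f (v j)) i = f (M.mulVec v i) := by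
  simp [Matrix.mulVec, dotProduct, map_sum]

set_option maxHeartbeats 2000000 in
lemma key_lemma {k : Type*} [Field k] (n : ℕ) :
    ∀ u w : ℕ, ∀ M : Matrix (Fin w) (Fin u) (MvPolynomial (Fin (n + 1)) k),
    (∀ i j, (M i j).IsHomogeneous 1) →
    (∃ z : Fin u → FractionRing (MvPolynomial (Fin (n + 1)) k), z ≠ 0 ∧
      (M.map (algebraMap _ _)).mulVec z = 0) →
    ∃ d, d ≤ u - 1 ∧ ∃ V : Fin u → MvPolynomial (Fin (n + 1)) k,
      V ≠ 0 ∧ (∀ j, (V j).IsHomogeneous d) ∧ M.mulVec V = 0 := by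
  classical
  set R := MvPolynomial (Fin (n + 1)) k with hR
  set F := FractionRing R with hF
  set f : R →+* F := algebraMap R F with hf
  have hfinj : Function.Injective f := IsFractionRing.injective R F
  intro u
  induction u with
  | zero =>
    rintro w M _ ⟨z, hz, -⟩
    exact absurd (funext fun i => i.elim0) hz
  | succ u IH =>
    rintro w M hlin ⟨z, hz, hzker⟩
    set A : Matrix (Fin w) (Fin (u + 1)) F := M.map f with hA
    by_cases hfull : ∀ z' : Fin (u + 1) → F, A.mulVec z' = 0 → z' ≠ 0 → ∀ j, z' j ≠ 0
    · -- full support case: Cramer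
      have hzlast : z (Fin.last u) ≠ 0 := hfull z hzker hz _
      set z' : Fin (u + 1) → F := (-(z (Fin.last u))⁻¹) • z with hz'
      have hz'ker : A.mulVec z' = 0 := by
        rw [hz', Matrix.mulVec_smul, hzker, smul_zero]
      have hz'last : z' (Fin.last u) = -1 := by
        rw [hz']
        simp only [Pi.smul_apply, smul_eq_mul]
        field_simp
      set A' : Matrix (Fin w) (Fin u) F := A.submatrix id Fin.castSucc with hA'
      set c : Fin w → F := fun i => A i (Fin.last u) with hc
      have hcol : A'.mulVec (z' ∘ Fin.castSucc) = c := by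
        funext i
        have h0 : A.mulVec z' i = 0 := congrFun hz'ker i
        rw [Matrix.mulVec, dotProduct, Fin.sum_univ_castSucc] at h0
        rw [Matrix.mulVec, dotProduct]
        have : ∑ j : Fin u, A' i j * (z' ∘ Fin.castSucc) j
            = ∑ j : Fin u, A i (Fin.castSucc j) * z' (Fin.castSucc j) := rfl
        rw [this]
        rw [hz'last] at h0
        have := h0
        linear_combination h0
      have hinj : Function.Injective A'.mulVec := by
        intro y₁ y₂ hy
        by_contra hne
        have hker : A'.mulVec (y₁ - y₂) = 0 := by
          rw [Matrix.mulVec_sub, hy, sub_self]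
        set y := y₁ - y₂ with hy'
        have hyne : y ≠ 0 := sub_ne_zero_of_ne hne
        set Y : Fin (u + 1) → F := Fin.snoc y 0 with hY
        have hYker : A.mulVec Y = 0 := by
          funext i
          rw [Matrix.mulVec, dotProduct, Fin.sum_univ_castSucc]
          have hlast : Y (Fin.last u) = 0 := by rw [hY]; simp
          rw [hlast, mul_zero, add_zero]
          have h0 : A'.mulVec y i = 0 := congrFun hker i
          rw [Matrix.mulVec, dotProduct] at h0
          rw [Pi.zero_apply]
          convert h0 using 1
          apply Finset.sum_congr rfl
          intro j _
          rw [hY]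
          simp [hA', Matrix.submatrix_apply]
        have hYne : Y ≠ 0 := by
          obtain ⟨l, hl⟩ := Function.ne_iff.1 hyne
          intro h0
          apply hl
          have := congrFun h0 (Fin.castSucc l)
          rwa [hY, Fin.snoc_castSucc] at this
        exact hfull Y hYker hYne (Fin.last u) (by rw [hY]; simp)
      obtain ⟨T, hT⟩ := exists_unit_submatrix A' hinj
      set B : Matrix (Fin u) (Fin u) F := A'.submatrix T id with hB
      set P : Matrix (Fin u) (Fin u) R := M.submatrix T Fin.castSucc with hP
      have hBP : B = P.map f := rfl
      set cpoly : Fin u → R := fun l => M (T l) (Fin.last u) with hcpoly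
      have hcT : c ∘ T = fun l => f (cpoly l) := rfl
      set y : Fin u → F := Matrix.cramer B (c ∘ T) with hy
      have h1 : B.mulVec y = B.det • (c ∘ T) := Matrix.mulVec_cramer B (c ∘ T)
      have h2 : B.mulVec (z' ∘ Fin.castSucc) = c ∘ T := by
        funext l
        have : B.mulVec (z' ∘ Fin.castSucc) l = A'.mulVec (z' ∘ Fin.castSucc) (T l) := rfl
        rw [this, hcol]
        rfl
      have h3 : y = B.det • (z' ∘ Fin.castSucc) := by
        apply Matrix.mulVec_injective_iff_isUnit.2 hT
        rw [h1, Matrix.mulVec_smul, h2]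
      set Y : Fin (u + 1) → F := Fin.snoc y (-B.det) with hY
      have hYz : Y = B.det • z' := by
        funext t
        refine Fin.lastCases ?_ ?_ t
        · rw [hY, Fin.snoc_last]
          simp only [Pi.smul_apply, smul_eq_mul, hz'last]
          ring
        · intro l
          rw [hY, Fin.snoc_castSucc, h3]
          rfl
      have hYker : A.mulVec Y = 0 := by
        rw [hYz, Matrix.mulVec_smul, hz'ker, smul_zero]
      set V : Fin (u + 1) → R :=
        Fin.snoc (fun l => ((P.updateCol l cpoly).det)) (-P.det) with hV
      have hYV : Y = fun t => f (V t) := by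
        funext t
        refine Fin.lastCases ?_ ?_ t
        · rw [hY, hV, Fin.snoc_last, Fin.snoc_last, map_neg, RingHom.map_det]
          rfl
        · intro l
          rw [hY, hV, Fin.snoc_castSucc, Fin.snoc_castSucc, hy, Matrix.cramer_apply,
            RingHom.map_det, RingHom.mapMatrix_apply, Matrix.map_updateCol]
          rfl
      have hdetB : B.det ≠ 0 := ((Matrix.isUnit_iff_isUnit_det B).1 hT).ne_zero
      have hPdet : P.det ≠ 0 := by
        intro h0
        apply hdetB
        rw [hBP, ← RingHom.mapMatrix_apply, ← RingHom.map_det, h0, map_zero]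
      refine ⟨u, by omega, V, ?_, ?_, ?_⟩
      · intro h0
        apply hPdet
        have := congrFun h0 (Fin.last u)
        rw [hV, Fin.snoc_last] at this
        simpa [neg_eq_zero] using this
      · intro t
        refine Fin.lastCases ?_ ?_ t
        · rw [hV, Fin.snoc_last]
          exact (det_isHomogeneous P (fun i j => hlin _ _)).neg
        · intro l
          rw [hV, Fin.snoc_castSucc]
          apply det_isHomogeneous
          intro i j
          rw [Matrix.updateCol_apply]
          split
          · exact hlin _ _
          · exact hlin _ _
      · funext i
        show M.mulVec V i = (0 : R)
        have h4 : f (M.mulVec V i) = 0 := by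
          rw [← mulVec_map' f M V i]
          have h5 : (fun j => f (V j)) = Y := by rw [hYV]
          rw [h5]
          exact congrFun hYker i
        apply hfinj
        rw [h4, map_zero]
    · -- some kernel vector has a zero coordinate: induct
      push_neg at hfull
      obtain ⟨z₀, hz₀ker, hz₀ne, j, hj⟩ := hfull
      set M' : Matrix (Fin w) (Fin u) R := M.submatrix id j.succAbove with hM'
      have hz₀'ne : (z₀ ∘ j.succAbove) ≠ 0 := by
        obtain ⟨l, hl⟩ := Function.ne_iff.1 hz₀ne
        have hlj : l ≠ j := by rintro rfl; exact hl hj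
        obtain ⟨t, ht⟩ := Fin.exists_succAbove_eq hlj
        intro h0
        apply hl
        have := congrFun h0 t
        simpa [ht] using this
      have hz₀'ker : (M'.map f).mulVec (z₀ ∘ j.succAbove) = 0 := by
        funext i
        have h0 : A.mulVec z₀ i = 0 := congrFun hz₀ker i
        rw [Matrix.mulVec, dotProduct, Fin.sum_univ_succAbove _ j, hj, mul_zero,
          zero_add] at h0
        rw [Matrix.mulVec, dotProduct]
        rw [Pi.zero_apply]
        convert h0 using 1
        rfl
      obtain ⟨d, hd, V', hV'ne, hV'hom, hV'ker⟩ := IH w M' (fun i l => hlin _ _)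
        ⟨z₀ ∘ j.succAbove, hz₀'ne, hz₀'ker⟩
      refine ⟨d, by omega, j.insertNth 0 V', ?_, ?_, ?_⟩
      · obtain ⟨l, hl⟩ := Function.ne_iff.1 hV'ne
        intro h0
        apply hl
        have := congrFun h0 (j.succAbove l)
        rwa [Fin.insertNth_apply_succAbove] at this
      · intro t
        rcases eq_or_ne t j with rfl | ht
        · rw [Fin.insertNth_apply_same]
          exact isHomogeneous_zero _ _ _
        · obtain ⟨l, hl⟩ := Fin.exists_succAbove_eq ht
          rw [← hl, Fin.insertNth_apply_succAbove]
          exact hV'hom l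
      · funext i
        have h0 : M'.mulVec V' i = 0 := congrFun hV'ker i
        rw [Matrix.mulVec, dotProduct, Fin.sum_univ_succAbove _ j,
          Fin.insertNth_apply_same, mul_zero, zero_add]
        rw [Matrix.mulVec, dotProduct] at h0
        rw [Pi.zero_apply]
        convert h0 using 1
        apply Finset.sum_congr rfl
        intro l _
        rw [Fin.insertNth_apply_succAbove]
        rfl

lemma univar_homog {k : Type*} [CommRing k] {p : MvPolynomial (Fin 1) k} {d : ℕ}
    (hp : p.IsHomogeneous d) :
    p = MvPolynomial.C (MvPolynomial.coeff (Finsupp.single 0 d) p) * MvPolynomial.X 0 ^ d := by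
  apply MvPolynomial.ext
  intro m
  rw [MvPolynomial.coeff_C_mul, MvPolynomial.coeff_X_pow]
  by_cases hm : m = Finsupp.single 0 d
  · subst hm; simp
  · rw [if_neg fun h => hm h.symm, mul_zero]
    by_contra h
    apply hm
    have hdeg := hp h
    have h0 : m = Finsupp.single 0 (m 0) := by
      refine Finsupp.ext fun i => ?_
      fin_cases i
      simp
    rw [h0]
    congr 1
    rw [h0] at hdeg
    simpa [Finsupp.weight_apply, Finsupp.sum_single_index] using hdeg


/-- Lemma lemma-1: Let `U` and `W` be finite-dimensional vector
spaces over an algebraically closed field `k` (of dimensions `u` and `w`), and let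
`ρ : U ⊗ O_{ℙⁿ} → W ⊗ O_{ℙⁿ}(1)` be a morphism of sheaves on `ℙⁿ` which is not
injective. Then for every integer `m ≥ (dim U − 1)·n` one has `H^0(ker(ρ)(m)) ≠ 0`.

Following the context, this is formalized in the equivalent graded-module language:
in terms of bases of `U` and `W`, the morphism `ρ` is given by a `w × u` matrix `M`
of linear forms in `R = k[x_0, …, x_n]`; non-injectivity of `ρ` means that `M` has a
nonzero kernel vector over `R`, and `H^0(ker(ρ)(m)) ≠ 0` means that the kernel of the
corresponding map of graded free modules `U ⊗ R → W ⊗ R(1)` contains a nonzero vector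
all of whose entries are homogeneous of degree `m`. -/

theorem kernel_has_sections {k : Type*} [Field k] [IsAlgClosed k]
    (n u w : ℕ)
    (M : Matrix (Fin w) (Fin u) (MvPolynomial (Fin (n + 1)) k))
    (hlin : ∀ i j, (M i j).IsHomogeneous 1)
    (hnotinj : ∃ v : Fin u → MvPolynomial (Fin (n + 1)) k,
      v ≠ 0 ∧ M.mulVec v = 0)
    (m : ℕ) (hm : (u - 1) * n ≤ m) :
    ∃ v : Fin u → MvPolynomial (Fin (n + 1)) k,
      v ≠ 0 ∧ (∀ j, (v j).IsHomogeneous m) ∧ M.mulVec v = 0 := by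
  classical
  have hfinj : Function.Injective
      (algebraMap (MvPolynomial (Fin (n + 1)) k)
        (FractionRing (MvPolynomial (Fin (n + 1)) k))) :=
    IsFractionRing.injective _ _
  set f := algebraMap (MvPolynomial (Fin (n + 1)) k)
    (FractionRing (MvPolynomial (Fin (n + 1)) k)) with hf
  obtain ⟨v, hv, hvker⟩ := hnotinj
  have hzne : (fun j => f (v j)) ≠ 0 := by
    obtain ⟨j, hj⟩ := Function.ne_iff.1 hv
    intro h0
    apply hj
    apply hfinj
    have := congrFun h0 j
    simpa using this
  have hzker : (M.map f).mulVec (fun j => f (v j)) = 0 := by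
    funext i
    have h0 : M.mulVec v i = 0 := congrFun hvker i
    show (M.map f).mulVec (fun j => f (v j)) i = 0
    rw [mulVec_map' f M v i, h0, map_zero]
  obtain ⟨d, hd, V, hVne, hVhom, hVker⟩ := key_lemma n u w M hlin ⟨_, hzne, hzker⟩
  obtain ⟨j0, hj0'⟩ := Function.ne_iff.1 hVne
  have hj0 : V j0 ≠ 0 := hj0'
  rcases Nat.eq_zero_or_pos n with rfl | hn
  · -- n = 0 : univariate
    set a : Fin u → k := fun j => MvPolynomial.coeff (Finsupp.single 0 d) (V j) with ha'
    have hVeq : ∀ j, V j = MvPolynomial.C (a j) * MvPolynomial.X 0 ^ d :=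
      fun j => univar_homog (hVhom j)
    have ha : a j0 ≠ 0 := fun h => hj0 (by rw [hVeq j0, h, map_zero, zero_mul])
    refine ⟨fun j => MvPolynomial.C (a j) * MvPolynomial.X 0 ^ m, ?_, ?_, ?_⟩
    · intro h0
      have := congrFun h0 j0
      exact (mul_ne_zero (fun hC => ha (MvPolynomial.C_injective _ _ (by rw [hC, map_zero])))
        (pow_ne_zero _ (MvPolynomial.X_ne_zero _))) this
    · intro j
      exact MvPolynomial.isHomogeneous_C_mul_X_pow _ _ _
    · funext i
      show M.mulVec _ i = 0
      have h0 : M.mulVec V i = 0 := congrFun hVker i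
      have hcancel : MvPolynomial.X (0 : Fin 1) ^ d *
          (M.mulVec (fun j => MvPolynomial.C (a j) * MvPolynomial.X 0 ^ m) i)
          = MvPolynomial.X 0 ^ m * (M.mulVec V i) := by
        rw [Matrix.mulVec, dotProduct, Matrix.mulVec, dotProduct,
          Finset.mul_sum, Finset.mul_sum]
        refine Finset.sum_congr rfl fun j _ => ?_
        rw [hVeq j]
        ring
      rw [h0, mul_zero] at hcancel
      exact (mul_eq_zero.1 hcancel).resolve_left
        (pow_ne_zero _ (MvPolynomial.X_ne_zero _))
  · -- n ≥ 1
    have hdm : d ≤ m := by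
      refine le_trans (le_trans hd ?_) hm
      exact Nat.le_mul_of_pos_right _ hn
    refine ⟨fun j => MvPolynomial.X 0 ^ (m - d) * V j, ?_, ?_, ?_⟩
    · intro h0
      have := congrFun h0 j0
      exact (mul_ne_zero (pow_ne_zero _ (MvPolynomial.X_ne_zero _)) hj0) this
    · intro j
      have := (MvPolynomial.isHomogeneous_X_pow (R := k) (0 : Fin (n + 1)) (m - d)).mul (hVhom j)
      rwa [Nat.sub_add_cancel hdm] at this
    · funext i
      show M.mulVec _ i = 0
      have h0 : M.mulVec V i = 0 := congrFun hVker i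
      have : M.mulVec (fun j => MvPolynomial.X 0 ^ (m - d) * V j) i
          = MvPolynomial.X 0 ^ (m - d) * M.mulVec V i := by
        rw [Matrix.mulVec, dotProduct, Matrix.mulVec, dotProduct, Finset.mul_sum]
        refine Finset.sum_congr rfl fun j _ => ?_
        ring
      rw [this, h0, mul_zero]
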